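/- arXiv:2009.11069 — 2 statements merged into one kernel-verified Lean document; each statement's English description precedes it below -/
import Mathlib

section
/- Consider the sequence defined by α⁰ = 0, A⁰ = 0, and for k ≥ 0, α^{k+1} is the greater root of (A^k + α^{k+1})(1 + A^k μ) = L(α^{k+1})², A^{k+1} = A^k + α^{k+1}, with 0 < μ ≤ L. Then for all N ≥ 1, A^N ≥ (1/L)(1 + (1/2)√(μ/L))^{2(N-1)}. -/
/-- for the Nesterov coefficient sequence `α⁰ = A⁰ = 0`,
`(A^k + α^{k+1})(1 + A^k μ) = L (α^{k+1})²` with `α^{k+1} > 0` (greater root) and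
`A^{k+1} = A^k + α^{k+1}`, one has `A^N ≥ (1/L)(1 + (1/2)√(μ/L))^{2(N-1)}` for `N ≥ 1`. -/
theorem A_seq_lower_bound (μ L : ℝ) (hμ : 0 < μ) (hμL : μ ≤ L)
    (α A : ℕ → ℝ) (hα0 : α 0 = 0) (hA0 : A 0 = 0)
    (hrec : ∀ k, A (k + 1) = A k + α (k + 1))
    (hroot : ∀ k, (A k + α (k + 1)) * (1 + A k * μ) = L * α (k + 1) ^ 2)
    (hpos : ∀ k, 0 < α (k + 1)) :
    ∀ N : ℕ, 1 ≤ N →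
      A N ≥ 1 / L * (1 + 1 / 2 * Real.sqrt (μ / L)) ^ (2 * (N - 1)) := by
  have hL : 0 < L := lt_of_lt_of_le hμ hμL
  set s := Real.sqrt (μ / L) with hs
  have hs0 : 0 ≤ s := Real.sqrt_nonneg _
  have hs2 : s ^ 2 = μ / L := Real.sq_sqrt (by positivity)
  have hμs : μ = s ^ 2 * L := by rw [hs2, div_mul_cancel₀ μ hL.ne']
  have hs1 : s ≤ 1 := by
    rw [hs, show (1:ℝ) = Real.sqrt 1 by simp]
    exact Real.sqrt_le_sqrt ((div_le_one hL).2 hμL)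
  have hsp : 0 < s := Real.sqrt_pos.2 (by positivity)
  have hA1 : A 1 = 1 / L := by
    have h := hroot 0
    have hα := hpos 0
    rw [hA0] at h
    have hb := hrec 0
    rw [hA0] at hb
    norm_num at hb
    have h2 : α (0 + 1) * (L * α (0 + 1) - 1) = 0 := by linear_combination -h
    rcases mul_eq_zero.1 h2 with h3 | h3
    · linarith
    · have : L * α (0 + 1) = 1 := by linarith
      rw [hb, show (1:ℕ) = 0 + 1 from rfl]
      field_simp
      linarith
  have step : ∀ k, 0 < A k → A (k + 1) ≥ (1 + 1 / 2 * s) ^ 2 * A k := by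
    intro k hAk
    have h := hroot k
    have hα := hpos k
    have hb := hrec k
    -- α² ≥ s² * A k * (A k + α)
    have hq : α (k + 1) ^ 2 ≥ s ^ 2 * A k * (A k + α (k + 1)) := by
      rw [hμs] at h
      nlinarith [hα, hAk, hL, sq_nonneg s]
    have hkey : α (k + 1) ≥ A k * (s + s ^ 2 / 2) := by
      by_contra hc
      push_neg at hc
      have h1 : 0 < A k * (s + s ^ 2 / 2) - α (k + 1) := by linarith
      have h2 : 0 < α (k + 1) + A k * (s - s ^ 2 / 2) := by
        have hss : 0 ≤ A k * (s - s ^ 2 / 2) := by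
          apply mul_nonneg hAk.le
          nlinarith [hs0, hs1]
        linarith
      nlinarith [mul_pos h1 h2, hq, mul_pos (mul_pos hAk hAk) (pow_pos hsp 4)]
    nlinarith [hkey, hAk, hs0]
  suffices h : ∀ n : ℕ, A (n + 1) ≥ 1 / L * (1 + 1 / 2 * s) ^ (2 * n) by
    intro N hN
    obtain ⟨n, rfl⟩ := Nat.exists_eq_add_of_le hN
    rw [show 1 + n = n + 1 from by omega, show 2 * (n + 1 - 1) = 2 * n from by omega]
    exact h n
  intro n
  induction n with
  | zero => simpa using hA1.ge
  | succ n ih =>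
    have hApos : 0 < A (n + 1) := lt_of_lt_of_le (by positivity) ih
    have hst := step (n + 1) hApos
    have hpow : (0:ℝ) ≤ (1 + 1 / 2 * s) ^ (2 * n) := by positivity
    have h2 : (1 + 1 / 2 * s) ^ (2 * (n + 1)) = (1 + 1 / 2 * s) ^ (2 * n) * (1 + 1 / 2 * s) ^ 2 := by
      ring
    rw [h2]
    nlinarith [mul_le_mul_of_nonneg_left ih (sq_nonneg (1 + 1 / 2 * s)), hst]
end

section
/- Consider the sequence defined by α⁰ = 0, A⁰ = 0, and for k ≥ 0, α^{k+1} is the greater root of (A^k + α^{k+1})(1 + A^k μ) = L(α^{k+1})², A^{k+1} = A^k + α^{k+1}, with 0 < μ ≤ L. Then for all k ≥ 1, (Σ_{i=1}^k A^i)/A^k ≤ 1 + √(L/μ). -/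
/-- for the Nesterov coefficient sequence `α⁰ = A⁰ = 0`,
`(A^k + α^{k+1})(1 + A^k μ) = L (α^{k+1})²` with `α^{k+1} > 0` (greater root) and
`A^{k+1} = A^k + α^{k+1}`, one has `(Σ_{i=1}^k A^i)/A^k ≤ 1 + √(L/μ)` for all `k ≥ 1`. -/
theorem A_seq_sum_ratio_bound (μ L : ℝ) (hμ : 0 < μ) (hμL : μ ≤ L)
    (α A : ℕ → ℝ) (hα0 : α 0 = 0) (hA0 : A 0 = 0)
    (hrec : ∀ k, A (k + 1) = A k + α (k + 1))
    (hroot : ∀ k, (A k + α (k + 1)) * (1 + A k * μ) = L * α (k + 1) ^ 2)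
    (hpos : ∀ k, 0 < α (k + 1)) :
    ∀ k : ℕ, 1 ≤ k →
      (∑ i ∈ Finset.Icc 1 k, A i) / A k ≤ 1 + Real.sqrt (L / μ) := by
  have hL : 0 < L := lt_of_lt_of_le hμ hμL
  set r := Real.sqrt (μ / L) with hr_def
  have hr : 0 < r := Real.sqrt_pos.2 (div_pos hμ hL)
  have hr2 : r ^ 2 = μ / L := Real.sq_sqrt (div_pos hμ hL).le
  have hAnn : ∀ k, 0 ≤ A k := by
    intro k
    induction k with
    | zero => simp [hA0]
    | succ n ih => rw [hrec]; exact add_nonneg ih (hpos n).le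
  have hApos : ∀ k, 0 < A (k + 1) := by
    intro k; rw [hrec]; exact add_pos_of_nonneg_of_pos (hAnn k) (hpos k)
  have hstep : ∀ k, (1 + r) * A k ≤ A (k + 1) := by
    intro k
    have h1 : μ * A k ^ 2 ≤ L * α (k + 1) ^ 2 := by
      rw [← hroot k]
      have h2 := hAnn k
      have h3 := (hpos k).le
      nlinarith [mul_nonneg (mul_nonneg h3 h2) hμ.le]
    have h2 : (r * A k) ^ 2 ≤ α (k + 1) ^ 2 := by
      rw [mul_pow, hr2]
      rw [div_mul_eq_mul_div, div_le_iff₀ hL]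
      nlinarith
    have h3 : r * A k ≤ α (k + 1) :=
      le_of_pow_le_pow_left₀ two_ne_zero (hpos k).le h2
    have h4 := hrec k
    linarith
  have key : ∀ k : ℕ, 1 ≤ k →
      (∑ i ∈ Finset.Icc 1 k, A i) ≤ (1 + 1 / r) * A k := by
    intro k hk
    induction k, hk using Nat.le_induction with
    | base =>
      simp only [Finset.Icc_self, Finset.sum_singleton]
      have := hApos 0
      have h1r : (0:ℝ) ≤ 1 / r := by positivity
      nlinarith
    | succ n hn ih =>
      rw [Finset.sum_Icc_succ_top (by omega : 1 ≤ n + 1)]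
      have hs := hstep n
      have hAn := hAnn n
      have hAn1 := (hApos n).le
      have h1 : (1 + 1 / r) * A n ≤ (1 / r) * A (n + 1) := by
        have hrne := hr.ne'
        have hm := mul_le_mul_of_nonneg_left hs (inv_pos.2 hr).le
        calc (1 + 1 / r) * A n = r⁻¹ * ((1 + r) * A n) := by
              field_simp
              ring
          _ ≤ r⁻¹ * A (n + 1) := hm
          _ = (1 / r) * A (n + 1) := by rw [one_div]
      nlinarith [ih]
  intro k hk
  have hAk := hApos (k - 1)
  rw [Nat.sub_add_cancel hk] at hAk
  have hinv : Real.sqrt (L / μ) = 1 / r := by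
    rw [hr_def, one_div, ← Real.sqrt_inv, inv_div]
  rw [hinv, div_le_iff₀ hAk]
  exact key k hk
end
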